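/- Let N be a positive integer, ν > 0 and C_p > 0 real numbers. Let M and U be symmetric positive definite real N×N matrices with factorizations M = L_M L_Mᵀ and U = L_U L_Uᵀ, and let G be a real N×N matrix with xᵀ G x ≥ 0 for every x ∈ ℝᴺ. Assume the discrete Poincaré inequality ‖L_Uᵀ x‖₂ ≤ C_p ‖L_Mᵀ x‖₂ holds for every x ∈ ℝᴺ, and assume G + ν M is invertible. If û, â ∈ ℝᴺ satisfy (G + ν M) û = U â, then ‖L_Mᵀ û‖₂ ≤ (C_p/ν) ‖L_Uᵀ â‖₂, where ‖·‖₂ is the Euclidean norm on ℝᴺ. -/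

import Mathlib

open Matrix

/-- Euclidean (`ℓ²`) norm of a vector in `ℝᴺ`. -/
noncomputable def eNorm {n : ℕ} (x : Fin n → ℝ) : ℝ :=
  ‖(WithLp.equiv 2 (Fin n → ℝ)).symm x‖

lemma eNorm_nonneg {n : ℕ} (x : Fin n → ℝ) : 0 ≤ eNorm x := norm_nonneg _

lemma dot_eq_inner {n : ℕ} (x y : Fin n → ℝ) :
    x ⬝ᵥ y = inner ℝ ((WithLp.equiv 2 (Fin n → ℝ)).symm x) ((WithLp.equiv 2 (Fin n → ℝ)).symm y) := by
  simp [dotProduct, PiLp.inner_apply, PiLp.toLp_apply, WithLp.equiv_symm_apply, mul_comm]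

lemma dot_self_eq_sq {n : ℕ} (x : Fin n → ℝ) : x ⬝ᵥ x = eNorm x ^ 2 := by
  rw [dot_eq_inner, real_inner_self_eq_norm_sq]; rfl

lemma dot_le_eNorm {n : ℕ} (x y : Fin n → ℝ) : x ⬝ᵥ y ≤ eNorm x * eNorm y := by
  rw [dot_eq_inner]; exact real_inner_le_norm _ _

lemma dot_fac {n : ℕ} (L : Matrix (Fin n) (Fin n) ℝ) (x y : Fin n → ℝ) :
    x ⬝ᵥ (L * Lᵀ).mulVec y = (Lᵀ.mulVec x) ⬝ᵥ (Lᵀ.mulVec y) := by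
  rw [← mulVec_mulVec, dotProduct_mulVec, ← mulVec_transpose]

theorem statement_4 (N : ℕ) (hN : 0 < N) (ν Cp : ℝ) (hν : 0 < ν) (hCp : 0 < Cp)
    (M U G LM LU : Matrix (Fin N) (Fin N) ℝ)
    (hM : M.PosDef) (hMsymm : M.IsSymm)
    (hU : U.PosDef) (hUsymm : U.IsSymm)
    (hfacM : M = LM * LMᵀ)
    (hfacU : U = LU * LUᵀ)
    (hG : ∀ x : Fin N → ℝ, 0 ≤ x ⬝ᵥ G.mulVec x)
    (hPoincare : ∀ x : Fin N → ℝ, eNorm (LUᵀ.mulVec x) ≤ Cp * eNorm (LMᵀ.mulVec x))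
    (hinv : IsUnit (G + ν • M))
    (uhat ahat : Fin N → ℝ)
    (heq : (G + ν • M).mulVec uhat = U.mulVec ahat) :
    eNorm (LMᵀ.mulVec uhat) ≤ (Cp / ν) * eNorm (LUᵀ.mulVec ahat) := by
  set a := eNorm (LMᵀ.mulVec uhat) with ha
  set b := eNorm (LUᵀ.mulVec ahat) with hb
  have ha0 : 0 ≤ a := eNorm_nonneg _
  have hb0 : 0 ≤ b := eNorm_nonneg _
  have hMdot : uhat ⬝ᵥ M.mulVec uhat = a ^ 2 := by
    rw [hfacM, dot_fac, dot_self_eq_sq]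
  have hUdot : uhat ⬝ᵥ U.mulVec ahat ≤ Cp * a * b := by
    rw [hfacU, dot_fac]
    calc (LUᵀ.mulVec uhat) ⬝ᵥ (LUᵀ.mulVec ahat)
        ≤ eNorm (LUᵀ.mulVec uhat) * b := dot_le_eNorm _ _
      _ ≤ (Cp * a) * b := by
          apply mul_le_mul_of_nonneg_right (hPoincare uhat) hb0
  have hkey : ν * a ^ 2 ≤ Cp * a * b := by
    have h1 : uhat ⬝ᵥ (G + ν • M).mulVec uhat = uhat ⬝ᵥ U.mulVec ahat := by rw [heq]
    rw [add_mulVec, smul_mulVec, dotProduct_add, dotProduct_smul] at h1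
    have := hG uhat
    rw [hMdot] at h1
    have : ν * a ^ 2 ≤ uhat ⬝ᵥ U.mulVec ahat := by
      rw [← h1]; simpa [smul_eq_mul] using this
    linarith [hUdot]
  rcases eq_or_lt_of_le ha0 with h | h
  · rw [← h]; positivity
  · rw [div_mul_eq_mul_div, le_div_iff₀ hν]
    nlinarith
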